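/- Let W be a committee of size k (with k ≥ 1), let ℓ be an integer with 1 ≤ ℓ ≤ k, and let X ⊆ N be a set of voters with |X| ≥ ℓ·n/k and |⋂_{i∈X} A_i| ≥ ℓ such that every voter i ∈ X has |W ∩ A_i| ≤ ℓ − 1. Then for any candidate c ∈ (⋂_{i∈X} A_i) \ W, it holds that PAV-score(W ∪ {c}) − PAV-score(W) ≥ |X|/ℓ ≥ n/k. -/

import Mathlib

open Finset

noncomputable def Hval (p : ℕ) : ℝ := ∑ j ∈ Finset.range p, (1 : ℝ) / (j + 1)

noncomputable def pavScore {C : Type*} [DecidableEq C] {n : ℕ}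
    (A : Fin n → Finset C) (W : Finset C) : ℝ :=
  ∑ i, Hval ((W ∩ A i).card)

noncomputable def mc {C : Type*} [DecidableEq C] {n : ℕ}
    (A : Fin n → Finset C) (w : C) (W : Finset C) : ℝ :=
  pavScore A W - pavScore A (W.erase w)

lemma Hval_succ (p : ℕ) : Hval (p + 1) = Hval p + 1 / (p + 1) := by
  simp [Hval, Finset.sum_range_succ]

lemma Hval_mono : Monotone Hval := by
  intro a b hab
  unfold Hval
  apply Finset.sum_le_sum_of_subset_of_nonneg (Finset.range_subset_range.2 hab)
  intro j _ _
  positivity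

theorem stmt14 {C : Type*} [Fintype C] [DecidableEq C] {n k ℓ : ℕ}
    (A : Fin n → Finset C) (W : Finset C)
    (hk : 1 ≤ k) (hW : W.card = k) (hl1 : 1 ≤ ℓ) (hlk : ℓ ≤ k)
    (X : Finset (Fin n))
    (hXcard : (ℓ : ℝ) * n / k ≤ (X.card : ℝ))
    (hXint : ℓ ≤ (Finset.univ.filter (fun c : C => ∀ i ∈ X, c ∈ A i)).card)
    (hrep : ∀ i ∈ X, (W ∩ A i).card ≤ ℓ - 1)
    (c : C) (hcX : ∀ i ∈ X, c ∈ A i) (hcW : c ∉ W) :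
    (X.card : ℝ) / ℓ ≤ pavScore A (insert c W) - pavScore A W ∧
    (n : ℝ) / k ≤ (X.card : ℝ) / ℓ := by
  have hlp : (0 : ℝ) < ℓ := by exact_mod_cast hl1
  have hkp : (0 : ℝ) < k := by exact_mod_cast hk
  constructor
  · have key : ∀ i : Fin n,
        (if i ∈ X then (1 : ℝ) / ℓ else 0) ≤
          Hval ((insert c W ∩ A i).card) - Hval ((W ∩ A i).card) := by
      intro i
      by_cases hi : i ∈ X
      · have hcA : c ∈ A i := hcX i hi
        have hins : insert c W ∩ A i = insert c (W ∩ A i) := by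
          ext x; simp [Finset.mem_insert, Finset.mem_inter]
          constructor
          · rintro ⟨h1 | h1, h2⟩
            · exact Or.inl h1
            · exact Or.inr ⟨h1, h2⟩
          · rintro (rfl | ⟨h1, h2⟩)
            · exact ⟨Or.inl rfl, hcA⟩
            · exact ⟨Or.inr h1, h2⟩
        have hcnot : c ∉ W ∩ A i := fun h => hcW (Finset.mem_inter.1 h).1
        have hcard : (insert c W ∩ A i).card = (W ∩ A i).card + 1 := by
          rw [hins, Finset.card_insert_of_notMem hcnot]
        rw [hcard, Hval_succ, if_pos hi]
        have hle : ((W ∩ A i).card : ℝ) + 1 ≤ (ℓ : ℝ) := by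
          have := hrep i hi
          have : (W ∩ A i).card + 1 ≤ ℓ := by omega
          exact_mod_cast this
        have := one_div_le_one_div_of_le (by positivity) hle
        linarith
      · rw [if_neg hi]
        have : (W ∩ A i).card ≤ (insert c W ∩ A i).card :=
          Finset.card_le_card (Finset.inter_subset_inter_right
            (Finset.subset_insert _ _))
        linarith [Hval_mono this]
    have hsum := Finset.sum_le_sum (fun i (_ : i ∈ Finset.univ) => key i)
    rw [Finset.sum_ite_mem, Finset.univ_inter, Finset.sum_const,
      Finset.sum_sub_distrib] at hsum
    simpa [pavScore, nsmul_eq_mul, mul_one_div, div_eq_mul_inv] using hsum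
  · rw [div_le_div_iff₀ hkp hlp]
    calc (n : ℝ) * ℓ = ℓ * n / k * k := by field_simp
    _ ≤ X.card * k := by
      apply mul_le_mul_of_nonneg_right hXcard hkp.le
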